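/- For every nonnegative integer n, the number of even-zeroed paths of length 4n (with no restriction on the total sum of steps) equals 4^n · B_n. -/

import Mathlib

/-- A path of length `l` is a sequence of `l` steps, each `+1` (up, `true`) or `-1`
(down, `false`). `psum p k` is the partial sum of the first `k` steps of `p`
(the height of the path after `k` steps). -/
def psum {l : ℕ} (p : Fin l → Bool) (k : ℕ) : ℤ :=
  ∑ i ∈ Finset.univ.filter (fun i : Fin l => (i : ℕ) < k), (if p i then (1 : ℤ) else -1)

/-- A path is even-zeroed if every index at which its partial sum is `0`
(i.e., every `x`-intercept) is divisible by `4`. -/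
def IsEvenZeroed {l : ℕ} (p : Fin l → Bool) : Prop :=
  ∀ k ≤ l, psum p k = 0 → 4 ∣ k

/-- A path of length `2m` is balanced if its total sum of steps is `0`
(equivalently, it has `m` up-steps and `m` down-steps). -/
def IsBalanced {l : ℕ} (p : Fin l → Bool) : Prop :=
  psum p l = 0

namespace EZP

open Finset

/-! ### Basic facts about `psum` -/

theorem psum_zero {l : ℕ} (p : Fin l → Bool) : psum p 0 = 0 := by
  simp [psum]

theorem psum_succ {l : ℕ} (p : Fin l → Bool) {k : ℕ} (h : k < l) :
    psum p (k + 1) = psum p k + (if p ⟨k, h⟩ then (1 : ℤ) else -1) := by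
  have hins : (Finset.univ.filter fun i : Fin l => (i : ℕ) < k + 1)
      = insert (⟨k, h⟩ : Fin l) (Finset.univ.filter fun i : Fin l => (i : ℕ) < k) := by
    ext i
    simp only [mem_filter, mem_univ, true_and, mem_insert, Fin.ext_iff]
    omega
  rw [psum, hins, Finset.sum_insert (by simp), psum]
  ring

theorem even_psum_add {l : ℕ} (p : Fin l → Bool) : ∀ k, k ≤ l → Even (psum p k + k) := by
  intro k
  induction k with
  | zero => intro _; simp [psum_zero]
  | succ n ih =>
    intro h
    have hn : n < l := h
    obtain ⟨c, hc⟩ := ih (le_of_lt hn)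
    rw [psum_succ p hn]
    by_cases hp : p ⟨n, hn⟩
    · refine ⟨c + 1, ?_⟩
      simp only [hp, if_true]
      push_cast
      push_cast at hc
      linarith
    · refine ⟨c, ?_⟩
      simp only [hp, if_false]
      push_cast
      push_cast at hc
      linarith

theorem two_dvd_of_psum_eq_zero {l : ℕ} (p : Fin l → Bool) {k : ℕ} (hk : k ≤ l)
    (h : psum p k = 0) : 2 ∣ k := by
  have := even_psum_add p k hk
  rw [h, zero_add] at this
  have : Even k := by exact_mod_cast (Int.even_coe_nat k).mp this
  exact this.two_dvd

/-! ### Appending and splitting paths -/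

def front {a b : ℕ} (p : Fin (a + b) → Bool) : Fin a → Bool := fun i => p (Fin.castAdd b i)

def back {a b : ℕ} (p : Fin (a + b) → Bool) : Fin b → Bool := fun j => p (Fin.natAdd a j)

theorem append_front_back {a b : ℕ} (p : Fin (a + b) → Bool) :
    Fin.append (front p) (back p) = p := by
  funext i
  refine Fin.addCases (fun i => ?_) (fun j => ?_) i
  · rw [Fin.append_left]; rfl
  · rw [Fin.append_right]; rfl

theorem front_append {a b : ℕ} (q : Fin a → Bool) (r : Fin b → Bool) :
    front (Fin.append q r) = q :=
  funext fun i => Fin.append_left q r i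

theorem back_append {a b : ℕ} (q : Fin a → Bool) (r : Fin b → Bool) :
    back (Fin.append q r) = r :=
  funext fun j => Fin.append_right q r j

theorem psum_append_of_le {a b : ℕ} (q : Fin a → Bool) (r : Fin b → Bool) {k : ℕ} (hk : k ≤ a) :
    psum (Fin.append q r) k = psum q k := by
  induction k with
  | zero => rw [psum_zero, psum_zero]
  | succ n ih =>
    have hna : n < a := hk
    rw [psum_succ _ (show n < a + b by omega), psum_succ _ hna, ih (le_of_lt hna)]
    congr 1
    have he : (⟨n, show n < a + b by omega⟩ : Fin (a + b)) = Fin.castAdd b ⟨n, hna⟩ := rfl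
    rw [he, Fin.append_left]

theorem psum_append_add {a b : ℕ} (q : Fin a → Bool) (r : Fin b → Bool) {j : ℕ} (hj : j ≤ b) :
    psum (Fin.append q r) (a + j) = psum q a + psum r j := by
  induction j with
  | zero => rw [Nat.add_zero, psum_zero, add_zero, psum_append_of_le q r le_rfl]
  | succ n ih =>
    have hnb : n < b := hj
    have h1 : a + n < a + b := by omega
    rw [show a + (n + 1) = (a + n) + 1 from rfl, psum_succ _ h1, ih (le_of_lt hnb),
      psum_succ _ hnb, add_assoc]
    congr 2
    have he : (⟨a + n, h1⟩ : Fin (a + b)) = Fin.natAdd a ⟨n, hnb⟩ := rfl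
    rw [he, Fin.append_right]

theorem psum_front {a b : ℕ} (p : Fin (a + b) → Bool) {k : ℕ} (hk : k ≤ a) :
    psum (front p) k = psum p k := by
  conv_rhs => rw [← append_front_back p]
  rw [psum_append_of_le _ _ hk]

/-! ### Predicates and counts -/

def NZ {l : ℕ} (p : Fin l → Bool) : Prop := ∀ k, 0 < k → k ≤ l → psum p k ≠ 0

def FR {l : ℕ} (p : Fin l → Bool) : Prop :=
  0 < l ∧ psum p l = 0 ∧ ∀ k, 0 < k → k < l → psum p k ≠ 0

def HasZero {l : ℕ} (p : Fin l → Bool) : Prop := ∃ k, 0 < k ∧ k ≤ l ∧ psum p k = 0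

def FZA {l : ℕ} (p : Fin l → Bool) (t : ℕ) : Prop :=
  0 < t ∧ t ≤ l ∧ psum p t = 0 ∧ ∀ k, 0 < k → k < t → psum p k ≠ 0

noncomputable def vc (l : ℕ) : ℕ := Nat.card {p : Fin l → Bool // FR p}
noncomputable def uc (l : ℕ) : ℕ := Nat.card {p : Fin l → Bool // NZ p}
noncomputable def bc (l : ℕ) : ℕ := Nat.card {p : Fin l → Bool // IsBalanced p}
noncomputable def ec (l : ℕ) : ℕ := Nat.card {p : Fin l → Bool // IsEvenZeroed p}

theorem nz_iff {l : ℕ} (p : Fin l → Bool) : NZ p ↔ ¬ HasZero p := by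
  unfold NZ HasZero
  push_neg
  tauto

open Classical in
noncomputable def fz {l : ℕ} (p : Fin l → Bool) : ℕ :=
  if h : HasZero p then Nat.find h else 0

open Classical in
theorem fz_eq_iff {l : ℕ} (p : Fin l → Bool) (h : HasZero p) {t : ℕ} :
    fz p = t ↔ FZA p t := by
  rw [fz, dif_pos h]
  refine (Nat.find_eq_iff h).trans ?_
  constructor
  · rintro ⟨⟨ht0, htl, hz⟩, hmin⟩
    refine ⟨ht0, htl, hz, fun k hk1 hk2 hk0 => ?_⟩
    exact hmin k hk2 ⟨hk1, le_trans (le_of_lt hk2) htl, hk0⟩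
  · rintro ⟨ht0, htl, hz, hmin⟩
    exact ⟨⟨ht0, htl, hz⟩, fun m hm hcon => hmin m hcon.1 hm hcon.2.2⟩

theorem hasZero_of_fza {l : ℕ} {p : Fin l → Bool} {t : ℕ} (h : FZA p t) : HasZero p :=
  ⟨t, h.1, h.2.1, h.2.2.1⟩

/-! ### The fiber equivalence -/

theorem fza_front_FR {a b : ℕ} {p : Fin (a + b) → Bool} (hp : FZA p a) : FR (front p) :=
  ⟨hp.1, by rw [psum_front p le_rfl]; exact hp.2.2.1,
    fun k hk1 hk2 => by rw [psum_front p (le_of_lt hk2)]; exact hp.2.2.2 k hk1 hk2⟩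

theorem fza_append {a b : ℕ} (q : Fin a → Bool) (r : Fin b → Bool) (hq : FR q) :
    FZA (Fin.append q r) a :=
  ⟨hq.1, Nat.le_add_right a b, by rw [psum_append_of_le q r le_rfl]; exact hq.2.1,
    fun k hk1 hk2 => by rw [psum_append_of_le q r (le_of_lt hk2)]; exact hq.2.2 k hk1 hk2⟩

variable {T : ∀ l, (Fin l → Bool) → Prop} {A : ℕ → Prop}

def fiberEquiv
    (hT : ∀ a b (q : Fin a → Bool) (r : Fin b → Bool), FR q →
        (T (a + b) (Fin.append q r) ↔ (A a ∧ T b r)))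
    (a b : ℕ) (hA : A a) :
    {p : Fin (a + b) → Bool // T (a + b) p ∧ FZA p a} ≃
      {q : Fin a → Bool // FR q} × {r : Fin b → Bool // T b r} where
  toFun := fun x => (⟨front x.1, fza_front_FR x.2.2⟩, ⟨back x.1, by
      have h := (hT a b (front x.1) (back x.1) (fza_front_FR x.2.2))
      rw [append_front_back] at h
      exact (h.mp x.2.1).2⟩)
  invFun := fun x => ⟨Fin.append x.1.1 x.2.1,
      (hT a b _ _ x.1.2).mpr ⟨hA, x.2.2⟩, fza_append _ _ x.1.2⟩
  left_inv := fun x => Subtype.ext (append_front_back x.1)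
  right_inv := fun x => by
    obtain ⟨⟨q, hq⟩, ⟨r, hr⟩⟩ := x
    simp only [Prod.mk.injEq, Subtype.mk.injEq]
    exact ⟨front_append q r, back_append q r⟩

theorem fiber_isEmpty
    (hT : ∀ a b (q : Fin a → Bool) (r : Fin b → Bool), FR q →
        (T (a + b) (Fin.append q r) ↔ (A a ∧ T b r)))
    (a b : ℕ) (hA : ¬ A a) :
    IsEmpty {p : Fin (a + b) → Bool // T (a + b) p ∧ FZA p a} := by
  refine ⟨fun x => ?_⟩
  have h := hT a b (front x.1) (back x.1) (fza_front_FR x.2.2)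
  rw [append_front_back] at h
  exact hA (h.mp x.2.1).1

theorem fiber_card [DecidablePred A]
    (hT : ∀ a b (q : Fin a → Bool) (r : Fin b → Bool), FR q →
        (T (a + b) (Fin.append q r) ↔ (A a ∧ T b r)))
    (a b : ℕ) :
    Nat.card {p : Fin (a + b) → Bool // T (a + b) p ∧ FZA p a} =
      if A a then vc a * Nat.card {r : Fin b → Bool // T b r} else 0 := by
  split_ifs with hA
  · rw [Nat.card_congr (fiberEquiv hT a b hA), Nat.card_prod]
    rfl
  · have := fiber_isEmpty hT a b hA
    exact Nat.card_of_isEmpty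

theorem fiber_card' [DecidablePred A]
    (hT : ∀ a b (q : Fin a → Bool) (r : Fin b → Bool), FR q →
        (T (a + b) (Fin.append q r) ↔ (A a ∧ T b r)))
    {t L : ℕ} (h1 : 1 ≤ t) (h2 : t ≤ L) :
    Nat.card {p : Fin L → Bool // T L p ∧ FZA p t} =
      if A t then vc t * Nat.card {r : Fin (L - t) → Bool // T (L - t) r} else 0 := by
  obtain ⟨b, rfl⟩ := Nat.exists_eq_add_of_le h2
  rw [Nat.add_sub_cancel_left]
  exact fiber_card hT t b

/-! ### The first-zero decomposition -/

theorem decomp (T : ∀ l, (Fin l → Bool) → Prop) (A : ℕ → Prop) [DecidablePred A]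
    (hT : ∀ a b (q : Fin a → Bool) (r : Fin b → Bool), FR q →
        (T (a + b) (Fin.append q r) ↔ (A a ∧ T b r))) (L : ℕ) :
    Nat.card {p : Fin L → Bool // T L p} =
      Nat.card {p : Fin L → Bool // T L p ∧ NZ p} +
      ∑ t ∈ Finset.Icc 1 L,
        (if A t then vc t * Nat.card {r : Fin (L - t) → Bool // T (L - t) r} else 0) := by
  classical
  have hcard : ∀ (P : (Fin L → Bool) → Prop) [DecidablePred P],
      Nat.card {p : Fin L → Bool // P p} = (Finset.univ.filter P).card := by
    intro P _
    rw [← Nat.card_eq_finsetCard]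
    exact Nat.card_congr (Equiv.subtypeEquivRight (by simp)).symm
  rw [hcard (fun p => T L p), hcard (fun p => T L p ∧ NZ p)]
  rw [← Finset.card_filter_add_card_filter_not
    (s := Finset.univ.filter fun p : Fin L → Bool => T L p) (p := fun p => NZ p)]
  congr 1
  · rw [Finset.filter_filter]
  · have hmap : ∀ p ∈ (Finset.univ.filter fun p : Fin L → Bool => T L p).filter
        (fun p => ¬ NZ p), fz p ∈ Finset.Icc 1 L := by
      intro p hp
      simp only [Finset.mem_filter] at hp
      have h : HasZero p := by
        have := hp.2
        rwa [nz_iff, not_not] at this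
      have hfza : FZA p (fz p) := (fz_eq_iff p h).mp rfl
      simp only [Finset.mem_Icc]
      exact ⟨hfza.1, hfza.2.1⟩
    rw [Finset.card_eq_sum_card_fiberwise hmap]
    refine Finset.sum_congr rfl fun t ht => ?_
    simp only [Finset.mem_Icc] at ht
    have hset : ((Finset.univ.filter fun p : Fin L → Bool => T L p).filter
          (fun p => ¬ NZ p)).filter (fun p => fz p = t)
        = Finset.univ.filter (fun p : Fin L → Bool => T L p ∧ FZA p t) := by
      ext p
      simp only [Finset.mem_filter, Finset.mem_univ, true_and]
      constructor
      · rintro ⟨⟨hT', hnz⟩, hfz⟩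
        have h : HasZero p := by rwa [nz_iff, not_not] at hnz
        exact ⟨hT', (fz_eq_iff p h).mp hfz⟩
      · rintro ⟨hT', hfza⟩
        have h : HasZero p := hasZero_of_fza hfza
        refine ⟨⟨hT', ?_⟩, (fz_eq_iff p h).mpr hfza⟩
        rw [nz_iff, not_not]
        exact h
    rw [hset, ← hcard (fun p => T L p ∧ FZA p t)]
    exact fiber_card' hT ht.1 ht.2

/-! ### Instantiations -/

theorem hT_bal : ∀ a b (q : Fin a → Bool) (r : Fin b → Bool), FR q →
    (IsBalanced (Fin.append q r) ↔ (True ∧ IsBalanced r)) := by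
  intro a b q r hq
  unfold IsBalanced
  rw [true_and, psum_append_add q r le_rfl, hq.2.1, zero_add]

theorem hT_ez : ∀ a b (q : Fin a → Bool) (r : Fin b → Bool), FR q →
    (IsEvenZeroed (Fin.append q r) ↔ ((4 ∣ a) ∧ IsEvenZeroed r)) := by
  intro a b q r hq
  constructor
  · intro h
    have ha4 : 4 ∣ a := h a (Nat.le_add_right a b)
      (by rw [psum_append_of_le q r le_rfl]; exact hq.2.1)
    refine ⟨ha4, fun j hj hz => ?_⟩
    have h4 : 4 ∣ a + j := h (a + j) (by omega)
      (by rw [psum_append_add q r hj, hq.2.1, zero_add]; exact hz)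
    omega
  · rintro ⟨ha4, hr⟩ k hk hz
    rcases le_or_gt k a with hka | hka
    · rw [psum_append_of_le q r hka] at hz
      rcases Nat.eq_zero_or_pos k with rfl | hk0
      · exact dvd_zero 4
      · rcases eq_or_lt_of_le hka with rfl | hlt
        · exact ha4
        · exact absurd hz (hq.2.2 k hk0 hlt)
    · obtain ⟨j, rfl⟩ : ∃ j, k = a + j := ⟨k - a, by omega⟩
      rw [psum_append_add q r (by omega), hq.2.1, zero_add] at hz
      have h4 : 4 ∣ j := hr j (by omega) hz
      omega

theorem card_all (L : ℕ) : Nat.card {p : Fin L → Bool // True} = 2 ^ L := by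
  rw [Nat.card_congr (Equiv.subtypeUnivEquiv fun _ => trivial), Nat.card_eq_fintype_card]
  simp [Fintype.card_fun]

theorem E2 (L : ℕ) : 2 ^ L = uc L + ∑ t ∈ Finset.Icc 1 L, vc t * 2 ^ (L - t) := by
  have h := decomp (fun _ _ => True) (fun _ => True) (fun a b q r _ => by simp) L
  rw [card_all] at h
  have h1 : Nat.card {p : Fin L → Bool // True ∧ NZ p} = uc L :=
    Nat.card_congr (Equiv.subtypeEquivRight (by simp))
  rw [h1] at h
  rw [h]
  congr 1
  refine Finset.sum_congr rfl fun t _ => ?_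
  rw [if_pos trivial, card_all]

theorem E1' (L : ℕ) (hL : 0 < L) :
    bc L = ∑ t ∈ Finset.Icc 1 L, vc t * bc (L - t) := by
  have h := decomp (fun _ p => IsBalanced p) (fun _ => True) hT_bal L
  have hempty : Nat.card {p : Fin L → Bool // IsBalanced p ∧ NZ p} = 0 := by
    have : IsEmpty {p : Fin L → Bool // IsBalanced p ∧ NZ p} :=
      ⟨fun x => x.2.2 L hL le_rfl x.2.1⟩
    exact Nat.card_of_isEmpty
  rw [hempty, zero_add] at h
  rw [bc, h]
  refine Finset.sum_congr rfl fun t _ => ?_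
  rw [if_pos trivial]
  rfl

theorem E3 (L : ℕ) :
    ec L = uc L + ∑ t ∈ Finset.Icc 1 L, (if 4 ∣ t then vc t * ec (L - t) else 0) := by
  have h := decomp (fun _ p => IsEvenZeroed p) (fun t => 4 ∣ t) hT_ez L
  have h1 : Nat.card {p : Fin L → Bool // IsEvenZeroed p ∧ NZ p} = uc L := by
    refine Nat.card_congr (Equiv.subtypeEquivRight fun p => ?_)
    constructor
    · exact And.right
    · intro hnz
      refine ⟨fun k hk hz => ?_, hnz⟩
      rcases Nat.eq_zero_or_pos k with rfl | h0
      · exact dvd_zero 4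
      · exact absurd hz (hnz k h0 hk)
  rw [h1] at h
  exact h

/-! ### Counting lemmas -/

theorem vc_odd {t : ℕ} (ht : ¬ 2 ∣ t) : vc t = 0 := by
  have : IsEmpty {p : Fin t → Bool // FR p} :=
    ⟨fun x => ht (two_dvd_of_psum_eq_zero x.1 le_rfl x.2.2.1)⟩
  exact Nat.card_of_isEmpty

theorem psum_full {l : ℕ} (p : Fin l → Bool) :
    psum p l = ((Finset.univ.filter fun i => p i = true).card : ℤ)
      - ((Finset.univ.filter fun i => ¬ (p i = true)).card : ℤ) := by
  rw [psum]
  have huniv : (Finset.univ.filter fun i : Fin l => (i : ℕ) < l) = Finset.univ := by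
    ext i; simp [i.isLt]
  rw [huniv, ← Finset.sum_filter_add_sum_filter_not Finset.univ (fun i => p i = true)]
  have h1 : ∑ i ∈ Finset.univ.filter (fun i => p i = true), (if p i then (1 : ℤ) else -1)
      = ((Finset.univ.filter fun i => p i = true).card : ℤ) := by
    rw [Finset.sum_congr rfl (fun i hi => ?_), Finset.sum_const, nsmul_eq_mul, mul_one]
    simp only [Finset.mem_filter] at hi
    simp [hi.2]
  have h2 : ∑ i ∈ Finset.univ.filter (fun i => ¬ (p i = true)), (if p i then (1 : ℤ) else -1)
      = -((Finset.univ.filter fun i => ¬ (p i = true)).card : ℤ) := by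
    rw [Finset.sum_congr rfl (fun i hi => ?_), Finset.sum_const, nsmul_eq_mul, mul_neg_one]
    simp only [Finset.mem_filter] at hi
    simp [hi.2]
  rw [h1, h2]
  ring

theorem bc_eq (k : ℕ) : bc (2 * k) = Nat.centralBinom k := by
  classical
  have e : {p : Fin (2 * k) → Bool // IsBalanced p} ≃ {s : Finset (Fin (2 * k)) // s.card = k} :=
    { toFun := fun x => ⟨Finset.univ.filter (fun i => x.1 i = true), by
        have hsum := psum_full x.1
        have hb : psum x.1 (2 * k) = 0 := x.2
        rw [hb] at hsum
        have htot : (Finset.univ.filter fun i => x.1 i = true).card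
            + (Finset.univ.filter fun i => ¬ (x.1 i = true)).card = 2 * k := by
          rw [Finset.card_filter_add_card_filter_not, Finset.card_univ, Fintype.card_fin]
        omega⟩
      invFun := fun s => ⟨fun i => decide (i ∈ s.1), by
        show psum _ (2 * k) = 0
        rw [psum_full]
        have hs1 : (Finset.univ.filter fun i : Fin (2 * k) => decide (i ∈ s.1) = true) = s.1 := by
          ext i; simp
        have htot : (Finset.univ.filter fun i : Fin (2 * k) => decide (i ∈ s.1) = true).card
            + (Finset.univ.filter fun i : Fin (2 * k) => ¬ (decide (i ∈ s.1) = true)).card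
            = 2 * k := by
          rw [Finset.card_filter_add_card_filter_not, Finset.card_univ, Fintype.card_fin]
        rw [hs1] at htot ⊢
        rw [s.2] at htot ⊢
        omega⟩
      left_inv := fun x => by
        apply Subtype.ext
        funext i
        by_cases h : x.1 i = true <;> simp [h]
      right_inv := fun s => by
        apply Subtype.ext
        ext i
        simp }
  rw [bc, Nat.card_congr e, Nat.card_eq_fintype_card, Fintype.card_finset_len, Fintype.card_fin,
    Nat.centralBinom]

/-! ### Sum manipulation helpers -/

theorem sum_Icc_filter_dvd {M : Type*} [AddCommMonoid M] {d n : ℕ} (hd : 0 < d) (f : ℕ → M) :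
    ∑ t ∈ Finset.Icc 1 (d * n), (if d ∣ t then f t else 0) = ∑ j ∈ Finset.Icc 1 n, f (d * j) := by
  rw [← Finset.sum_filter]
  have himg : (Finset.Icc 1 (d * n)).filter (fun t => d ∣ t)
      = (Finset.Icc 1 n).image (fun j => d * j) := by
    ext x
    simp only [Finset.mem_filter, Finset.mem_Icc, Finset.mem_image]
    constructor
    · rintro ⟨⟨h1, h2⟩, j, rfl⟩
      refine ⟨j, ⟨?_, ?_⟩, rfl⟩
      · rcases Nat.eq_zero_or_pos j with rfl | hj
        · omega
        · exact hj
      · exact Nat.le_of_mul_le_mul_left h2 hd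
    · rintro ⟨j, ⟨hj1, hj2⟩, rfl⟩
      exact ⟨⟨by nlinarith, Nat.mul_le_mul_left d hj2⟩, ⟨j, rfl⟩⟩
  rw [himg, Finset.sum_image (fun a _ b _ h => by
    exact Nat.eq_of_mul_eq_mul_left hd h)]

theorem sum_even_reduce (m : ℕ) (g : ℕ → ℕ) :
    ∑ t ∈ Finset.Icc 1 (2 * m), vc t * g t = ∑ j ∈ Finset.Icc 1 m, vc (2 * j) * g (2 * j) := by
  rw [← sum_Icc_filter_dvd (by norm_num) (fun t => vc t * g t)]
  refine Finset.sum_congr rfl fun t _ => ?_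
  by_cases h : 2 ∣ t
  · rw [if_pos h]
  · rw [if_neg h, vc_odd h, zero_mul]

theorem sum_Icc_one_eq_range (n : ℕ) {M : Type*} [AddCommMonoid M] (g : ℕ → M) :
    ∑ j ∈ Finset.Icc 1 n, g j = ∑ i ∈ Finset.range n, g (i + 1) := by
  have himg : Finset.Icc 1 n = (Finset.range n).image (fun i => i + 1) := by
    ext x
    simp only [Finset.mem_Icc, Finset.mem_image, Finset.mem_range]
    constructor
    · intro hx
      exact ⟨x - 1, by omega, by omega⟩
    · rintro ⟨i, hi, rfl⟩
      omega
  rw [himg, Finset.sum_image (fun a _ b _ h => by omega)]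

/-! ### The central binomial convolution identity -/

theorem sum_cb (m : ℕ) :
    ∑ k ∈ Finset.range (m + 1), Nat.centralBinom k * Nat.centralBinom (m - k) = 4 ^ m := by
  induction m with
  | zero => simp
  | succ m ih =>
    have key : (m + 1) * ∑ k ∈ Finset.range (m + 2),
        Nat.centralBinom k * Nat.centralBinom (m + 1 - k)
        = (m + 1) * (4 * ∑ k ∈ Finset.range (m + 1),
            Nat.centralBinom k * Nat.centralBinom (m - k)) := by
      rw [Finset.mul_sum]
      have hsplit : ∀ k ∈ Finset.range (m + 2),
          (m + 1) * (Nat.centralBinom k * Nat.centralBinom (m + 1 - k))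
          = k * (Nat.centralBinom k * Nat.centralBinom (m + 1 - k))
            + (m + 1 - k) * (Nat.centralBinom k * Nat.centralBinom (m + 1 - k)) := by
        intro k hk
        simp only [Finset.mem_range] at hk
        have hkk : k + (m + 1 - k) = m + 1 := by omega
        calc (m + 1) * (Nat.centralBinom k * Nat.centralBinom (m + 1 - k))
            = (k + (m + 1 - k)) * (Nat.centralBinom k * Nat.centralBinom (m + 1 - k)) := by
              rw [hkk]
          _ = k * (Nat.centralBinom k * Nat.centralBinom (m + 1 - k))
              + (m + 1 - k) * (Nat.centralBinom k * Nat.centralBinom (m + 1 - k)) := by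
              rw [add_mul]
      rw [Finset.sum_congr rfl hsplit, Finset.sum_add_distrib]
      have hsum1 : ∑ k ∈ Finset.range (m + 2),
          k * (Nat.centralBinom k * Nat.centralBinom (m + 1 - k))
          = ∑ i ∈ Finset.range (m + 1),
              2 * (2 * i + 1) * (Nat.centralBinom i * Nat.centralBinom (m - i)) := by
        rw [Finset.sum_range_succ' (fun k => k * (Nat.centralBinom k * Nat.centralBinom (m + 1 - k))) (m + 1)]
        simp only [zero_mul, add_zero]
        refine Finset.sum_congr rfl fun i hi => ?_
        simp only [Finset.mem_range] at hi
        have h1 : m + 1 - (i + 1) = m - i := by omega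
        rw [h1]
        have h2 : (i + 1) * Nat.centralBinom (i + 1) = 2 * (2 * i + 1) * Nat.centralBinom i :=
          Nat.succ_mul_centralBinom_succ i
        calc (i + 1) * (Nat.centralBinom (i + 1) * Nat.centralBinom (m - i))
            = ((i + 1) * Nat.centralBinom (i + 1)) * Nat.centralBinom (m - i) := by ring
          _ = (2 * (2 * i + 1) * Nat.centralBinom i) * Nat.centralBinom (m - i) := by rw [h2]
          _ = 2 * (2 * i + 1) * (Nat.centralBinom i * Nat.centralBinom (m - i)) := by ring
      have hsum2 : ∑ k ∈ Finset.range (m + 2),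
          (m + 1 - k) * (Nat.centralBinom k * Nat.centralBinom (m + 1 - k))
          = ∑ k ∈ Finset.range (m + 1),
              2 * (2 * (m - k) + 1) * (Nat.centralBinom k * Nat.centralBinom (m - k)) := by
        rw [Finset.sum_range_succ]
        simp only [Nat.sub_self, zero_mul, add_zero]
        refine Finset.sum_congr rfl fun k hk => ?_
        simp only [Finset.mem_range] at hk
        have h1 : m + 1 - k = (m - k) + 1 := by omega
        rw [h1]
        have h2 : (m - k + 1) * Nat.centralBinom (m - k + 1)
            = 2 * (2 * (m - k) + 1) * Nat.centralBinom (m - k) :=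
          Nat.succ_mul_centralBinom_succ (m - k)
        calc (m - k + 1) * (Nat.centralBinom k * Nat.centralBinom (m - k + 1))
            = ((m - k + 1) * Nat.centralBinom (m - k + 1)) * Nat.centralBinom k := by ring
          _ = (2 * (2 * (m - k) + 1) * Nat.centralBinom (m - k)) * Nat.centralBinom k := by rw [h2]
          _ = 2 * (2 * (m - k) + 1) * (Nat.centralBinom k * Nat.centralBinom (m - k)) := by ring
      rw [hsum1, hsum2, ← Finset.sum_add_distrib]
      have hfin : ∀ k ∈ Finset.range (m + 1),
          2 * (2 * k + 1) * (Nat.centralBinom k * Nat.centralBinom (m - k))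
            + 2 * (2 * (m - k) + 1) * (Nat.centralBinom k * Nat.centralBinom (m - k))
          = (m + 1) * (4 * (Nat.centralBinom k * Nat.centralBinom (m - k))) := by
        intro k hk
        simp only [Finset.mem_range] at hk
        have hco : 2 * (2 * k + 1) + 2 * (2 * (m - k) + 1) = 4 * (m + 1) := by omega
        calc 2 * (2 * k + 1) * (Nat.centralBinom k * Nat.centralBinom (m - k))
              + 2 * (2 * (m - k) + 1) * (Nat.centralBinom k * Nat.centralBinom (m - k))
            = (2 * (2 * k + 1) + 2 * (2 * (m - k) + 1))
                * (Nat.centralBinom k * Nat.centralBinom (m - k)) := by ring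
          _ = (4 * (m + 1)) * (Nat.centralBinom k * Nat.centralBinom (m - k)) := by rw [hco]
          _ = (m + 1) * (4 * (Nat.centralBinom k * Nat.centralBinom (m - k))) := by ring
      rw [Finset.sum_congr rfl hfin, ← Finset.mul_sum, ← Finset.mul_sum]
    have := Nat.eq_of_mul_eq_mul_left (Nat.succ_pos m) key
    rw [this, ih]
    ring

/-! ### Power series bookkeeping -/

open PowerSeries

noncomputable def SB : PowerSeries ℤ := PowerSeries.mk fun m => (Nat.centralBinom m : ℤ)
noncomputable def SB' : PowerSeries ℤ := PowerSeries.mk fun m => (-1) ^ m * (Nat.centralBinom m : ℤ)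
noncomputable def SW : PowerSeries ℤ := PowerSeries.mk fun k => if k = 0 then 0 else (vc (2 * k) : ℤ)
noncomputable def SF : PowerSeries ℤ := PowerSeries.mk fun m => (4 : ℤ) ^ m
noncomputable def SG : PowerSeries ℤ := PowerSeries.mk fun m => (-4 : ℤ) ^ m

theorem SB_mul_SB : SB * SB = SF := by
  ext n
  rw [PowerSeries.coeff_mul, Finset.Nat.sum_antidiagonal_eq_sum_range_succ_mk]
  simp only [SB, SF, PowerSeries.coeff_mk]
  exact_mod_cast sum_cb n

theorem SB'_mul_SB' : SB' * SB' = SG := by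
  ext n
  rw [PowerSeries.coeff_mul, Finset.Nat.sum_antidiagonal_eq_sum_range_succ_mk]
  simp only [SB', SG, PowerSeries.coeff_mk]
  have hcongr : ∀ k ∈ Finset.range (n + 1),
      ((-1 : ℤ) ^ k * (Nat.centralBinom k : ℤ)) * ((-1) ^ (n - k) * (Nat.centralBinom (n - k) : ℤ))
      = (-1) ^ n * ((Nat.centralBinom k : ℤ) * (Nat.centralBinom (n - k) : ℤ)) := by
    intro k hk
    simp only [Finset.mem_range] at hk
    have h : (-1 : ℤ) ^ k * (-1) ^ (n - k) = (-1) ^ n := by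
      rw [← pow_add]
      congr 1
      omega
    calc ((-1 : ℤ) ^ k * (Nat.centralBinom k : ℤ)) * ((-1) ^ (n - k) * (Nat.centralBinom (n - k) : ℤ))
        = ((-1 : ℤ) ^ k * (-1) ^ (n - k)) * ((Nat.centralBinom k : ℤ) * (Nat.centralBinom (n - k) : ℤ)) := by ring
      _ = (-1) ^ n * ((Nat.centralBinom k : ℤ) * (Nat.centralBinom (n - k) : ℤ)) := by rw [h]
  rw [Finset.sum_congr rfl hcongr, ← Finset.mul_sum]
  have : ∑ k ∈ Finset.range (n + 1), ((Nat.centralBinom k : ℤ) * (Nat.centralBinom (n - k) : ℤ))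
      = 4 ^ n := by exact_mod_cast sum_cb n
  rw [this]
  rw [show (-4 : ℤ) = -1 * 4 by ring, mul_pow]

theorem coeff_one_sub_SW (k : ℕ) :
    PowerSeries.coeff k (1 - SW) = if k = 0 then 1 else -(vc (2 * k) : ℤ) := by
  rw [map_sub, PowerSeries.coeff_one]
  simp only [SW, PowerSeries.coeff_mk]
  by_cases h : k = 0 <;> simp [h]

theorem coeff_one_sub_SW_zero : PowerSeries.coeff 0 (1 - SW) = 1 := by
  rw [coeff_one_sub_SW, if_pos rfl]

theorem coeff_one_sub_SW_succ (k : ℕ) :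
    PowerSeries.coeff (k + 1) (1 - SW) = -(vc (2 * (k + 1)) : ℤ) := by
  rw [coeff_one_sub_SW, if_neg (by omega)]

theorem one_sub_SW_mul_SB : (1 - SW) * SB = 1 := by
  ext n
  rw [PowerSeries.coeff_mul, Finset.Nat.sum_antidiagonal_eq_sum_range_succ_mk]
  rcases Nat.eq_zero_or_pos n with rfl | hn
  · simp [coeff_one_sub_SW, SB, PowerSeries.coeff_mk, Nat.centralBinom]
  · rw [PowerSeries.coeff_one, if_neg (by omega)]
    -- key combinatorial identity : bc relation
    have hkey : (Nat.centralBinom n : ℤ)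
        = ∑ i ∈ Finset.range n, (vc (2 * (i + 1)) : ℤ) * (Nat.centralBinom (n - (i + 1)) : ℤ) := by
      have h1 := E1' (2 * n) (by omega)
      have h2 : ∑ t ∈ Finset.Icc 1 (2 * n), vc t * bc (2 * n - t)
          = ∑ j ∈ Finset.Icc 1 n, vc (2 * j) * bc (2 * n - 2 * j) :=
        sum_even_reduce n (fun t => bc (2 * n - t))
      rw [h2] at h1
      have h3 : ∑ j ∈ Finset.Icc 1 n, vc (2 * j) * bc (2 * n - 2 * j)
          = ∑ j ∈ Finset.Icc 1 n, vc (2 * j) * Nat.centralBinom (n - j) := by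
        refine Finset.sum_congr rfl fun j hj => ?_
        simp only [Finset.mem_Icc] at hj
        rw [show 2 * n - 2 * j = 2 * (n - j) by omega, bc_eq]
      rw [h3, sum_Icc_one_eq_range] at h1
      rw [bc_eq] at h1
      exact_mod_cast congrArg (fun x : ℕ => (x : ℤ)) h1
    rw [Finset.sum_range_succ'
      (fun k => PowerSeries.coeff k (1 - SW) * PowerSeries.coeff (n - k) SB) n]
    have hstep : ∀ i ∈ Finset.range n,
        PowerSeries.coeff (i + 1) (1 - SW) * PowerSeries.coeff (n - (i + 1)) SB
        = -((vc (2 * (i + 1)) : ℤ) * (Nat.centralBinom (n - (i + 1)) : ℤ)) := by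
      intro i _
      rw [coeff_one_sub_SW_succ]
      simp only [SB, PowerSeries.coeff_mk]
      ring
    rw [Finset.sum_congr rfl hstep, Finset.sum_neg_distrib, coeff_one_sub_SW_zero]
    simp only [SB, PowerSeries.coeff_mk, Nat.sub_zero, one_mul]
    rw [← hkey]
    ring

theorem uc_eq (n : ℕ) : uc (2 * n) = Nat.centralBinom n := by
  have hser : (1 - SW) * SF = SB := by
    rw [← SB_mul_SB, ← mul_assoc, one_sub_SW_mul_SB, one_mul]
  have h := congrArg (PowerSeries.coeff n) hser
  rw [PowerSeries.coeff_mul, Finset.Nat.sum_antidiagonal_eq_sum_range_succ_mk] at h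
  simp only [SB, SF, PowerSeries.coeff_mk] at h
  -- LHS of h equals 4^n - ∑ ...
  have hE2 := E2 (2 * n)
  have h2 : ∑ t ∈ Finset.Icc 1 (2 * n), vc t * 2 ^ (2 * n - t)
      = ∑ j ∈ Finset.Icc 1 n, vc (2 * j) * 2 ^ (2 * n - 2 * j) :=
    sum_even_reduce n (fun t => 2 ^ (2 * n - t))
  rw [h2] at hE2
  have h3 : ∑ j ∈ Finset.Icc 1 n, vc (2 * j) * 2 ^ (2 * n - 2 * j)
      = ∑ j ∈ Finset.Icc 1 n, vc (2 * j) * 4 ^ (n - j) := by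
    refine Finset.sum_congr rfl fun j hj => ?_
    simp only [Finset.mem_Icc] at hj
    rw [show 2 * n - 2 * j = 2 * (n - j) by omega, pow_mul]
    norm_num
  rw [h3, sum_Icc_one_eq_range] at hE2
  have h4 : (2 : ℕ) ^ (2 * n) = 4 ^ n := by
    rw [pow_mul]; norm_num
  rw [h4] at hE2
  -- now massage h
  rw [Finset.sum_range_succ'
    (fun k => PowerSeries.coeff k (1 - SW) * ((4 : ℤ) ^ (n - k))) n] at h
  have hstep : ∀ i ∈ Finset.range n,
      PowerSeries.coeff (i + 1) (1 - SW) * (4 : ℤ) ^ (n - (i + 1))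
      = -((vc (2 * (i + 1)) : ℤ) * (4 : ℤ) ^ (n - (i + 1))) := by
    intro i _
    rw [coeff_one_sub_SW_succ]
    ring
  rw [Finset.sum_congr rfl hstep, Finset.sum_neg_distrib, coeff_one_sub_SW_zero,
    Nat.sub_zero, one_mul] at h
  have hcast : ((uc (2 * n) : ℤ))
      = 4 ^ n - ∑ i ∈ Finset.range n, (vc (2 * (i + 1)) : ℤ) * (4 : ℤ) ^ (n - (i + 1)) := by
    have := congrArg (fun x : ℕ => (x : ℤ)) hE2
    push_cast at this
    push_cast
    linarith
  have : (uc (2 * n) : ℤ) = (Nat.centralBinom n : ℤ) := by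
    rw [hcast, ← h]
    ring
  exact_mod_cast this

/-! ### The signed convolution `P` -/

noncomputable def Pc (m : ℕ) : ℤ := PowerSeries.coeff m (SB * SB')

theorem Pc_odd {m : ℕ} (hm : ¬ 2 ∣ m) : Pc m = 0 := by
  have hcoeff : Pc m = ∑ k ∈ Finset.range (m + 1),
      (Nat.centralBinom k : ℤ) * ((-1) ^ (m - k) * (Nat.centralBinom (m - k) : ℤ)) := by
    rw [Pc, PowerSeries.coeff_mul, Finset.Nat.sum_antidiagonal_eq_sum_range_succ_mk]
    simp only [SB, SB', PowerSeries.coeff_mk]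
  set f : ℕ → ℤ := fun k =>
    (Nat.centralBinom k : ℤ) * ((-1) ^ (m - k) * (Nat.centralBinom (m - k) : ℤ)) with hf
  have hrefl := Finset.sum_range_reflect f (m + 1)
  have hneg : ∀ j ∈ Finset.range (m + 1), f (m + 1 - 1 - j) = -(f j) := by
    intro j hj
    simp only [Finset.mem_range] at hj
    have hjm : j ≤ m := by omega
    simp only [hf]
    have e1 : m + 1 - 1 - j = m - j := by omega
    have e2 : m - (m - j) = j := by omega
    rw [e1, e2]
    have hsign : (-1 : ℤ) ^ j = -((-1 : ℤ) ^ (m - j)) := by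
      rcases Nat.even_or_odd j with hev | hod
      · rw [hev.neg_one_pow]
        have : Odd (m - j) := by
          rcases hev with ⟨c, hc⟩
          have hmo : Odd m := Nat.odd_iff.mpr (by omega)
          rcases hmo with ⟨d, hd⟩
          exact ⟨d - c, by omega⟩
        rw [this.neg_one_pow]
        ring
      · rw [hod.neg_one_pow]
        have : Even (m - j) := by
          rcases hod with ⟨c, hc⟩
          have hmo : Odd m := Nat.odd_iff.mpr (by omega)
          rcases hmo with ⟨d, hd⟩
          exact ⟨d - c, by omega⟩
        rw [this.neg_one_pow]
    rw [hsign]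
    ring
  rw [Finset.sum_congr rfl hneg] at hrefl
  rw [Finset.sum_neg_distrib] at hrefl
  have : Pc m = -(Pc m) := by
    rw [hcoeff]
    conv_lhs => rw [← hrefl]
  linarith

theorem sum_range_even' (n : ℕ) (f : ℕ → ℤ) (hf : ∀ t ≤ 2 * n, ¬ 2 ∣ t → f t = 0) :
    ∑ t ∈ Finset.range (2 * n + 1), f t = ∑ i ∈ Finset.range (n + 1), f (2 * i) := by
  induction n with
  | zero => simp
  | succ m ih =>
    have hsplit : ∑ i ∈ Finset.range (m + 2), f (2 * i)
        = (∑ i ∈ Finset.range (m + 1), f (2 * i)) + f (2 * (m + 1)) :=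
      Finset.sum_range_succ _ _
    have h1 : 2 * (m + 1) + 1 = (2 * m + 1) + 1 + 1 := by ring
    rw [h1, Finset.sum_range_succ, Finset.sum_range_succ,
      ih (fun t ht h2 => hf t (by omega) h2), hsplit,
      hf (2 * m + 1) (by omega) (by omega), show 2 * m + 1 + 1 = 2 * (m + 1) by ring]
    ring

theorem neg_one_pow_sum (n : ℕ) : ∑ k ∈ Finset.range (2 * n + 1), (-1 : ℤ) ^ k = 1 := by
  induction n with
  | zero => simp
  | succ m ih =>
    have h1 : 2 * (m + 1) + 1 = (2 * m + 1) + 1 + 1 := by ring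
    rw [h1, Finset.sum_range_succ, Finset.sum_range_succ, ih]
    have ho : Odd (2 * m + 1) := ⟨m, by omega⟩
    have he : Even (2 * m + 1 + 1) := ⟨m + 1, by omega⟩
    rw [ho.neg_one_pow, he.neg_one_pow]
    ring

theorem Pc_def (m : ℕ) : Pc m = PowerSeries.coeff m (SB * SB') := rfl

theorem Pc_zero : Pc 0 = 1 := by
  rw [Pc_def, PowerSeries.coeff_mul]
  simp [SB, SB', Nat.centralBinom]

theorem Pc_even (n : ℕ) : Pc (2 * n) = 4 ^ n * (Nat.centralBinom n : ℤ) := by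
  induction n using Nat.strong_induction_on with
  | _ n ih =>
    rcases Nat.eq_zero_or_pos n with rfl | hn
    · simpa [Nat.centralBinom] using Pc_zero
    · obtain ⟨m, rfl⟩ : ∃ m, n = m + 1 := ⟨n - 1, by omega⟩
      have hPP : (SB * SB') * (SB * SB') = SF * SG := by
        rw [show (SB * SB') * (SB * SB') = (SB * SB) * (SB' * SB') by ring,
          SB_mul_SB, SB'_mul_SB']
      have hc := congrArg (PowerSeries.coeff (2 * (m + 1))) hPP
      rw [PowerSeries.coeff_mul, PowerSeries.coeff_mul,
        Finset.Nat.sum_antidiagonal_eq_sum_range_succ_mk,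
        Finset.Nat.sum_antidiagonal_eq_sum_range_succ_mk] at hc
      have hrhs : ∑ k ∈ Finset.range (2 * (m + 1) + 1),
          PowerSeries.coeff k SF * PowerSeries.coeff (2 * (m + 1) - k) SG
            = 16 ^ (m + 1) := by
        simp only [SF, SG, PowerSeries.coeff_mk]
        have hcongr : ∀ k ∈ Finset.range (2 * (m + 1) + 1),
            (4 : ℤ) ^ k * (-4 : ℤ) ^ (2 * (m + 1) - k)
              = 4 ^ (2 * (m + 1)) * (-1) ^ (2 * (m + 1) - k) := by
          intro k hk
          simp only [Finset.mem_range] at hk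
          rw [show (-4 : ℤ) = -1 * 4 by ring, mul_pow, ← mul_assoc,
            mul_comm ((4 : ℤ) ^ k) ((-1 : ℤ) ^ (2 * (m + 1) - k)), mul_assoc, ← pow_add,
            show k + (2 * (m + 1) - k) = 2 * (m + 1) by omega]
          ring
        rw [Finset.sum_congr rfl hcongr, ← Finset.mul_sum]
        have hone : ∑ k ∈ Finset.range (2 * (m + 1) + 1), (-1 : ℤ) ^ (2 * (m + 1) - k) = 1 := by
          have hrefl := Finset.sum_range_reflect (fun k => (-1 : ℤ) ^ k) (2 * (m + 1) + 1)
          have heq : ∀ k ∈ Finset.range (2 * (m + 1) + 1),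
              (-1 : ℤ) ^ (2 * (m + 1) + 1 - 1 - k) = (-1 : ℤ) ^ (2 * (m + 1) - k) := by
            intro k hk
            congr 1
          rw [← Finset.sum_congr rfl heq, hrefl, neg_one_pow_sum]
        rw [hone, mul_one, pow_mul]
        norm_num
      rw [hrhs] at hc
      simp only [← Pc_def] at hc
      have hev : ∑ k ∈ Finset.range (2 * (m + 1) + 1), Pc k * Pc (2 * (m + 1) - k)
          = ∑ i ∈ Finset.range (m + 2), Pc (2 * i) * Pc (2 * (m + 1) - 2 * i) :=
        sum_range_even' (m + 1) (fun k => Pc k * Pc (2 * (m + 1) - k))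
          (fun t _ h2 => by simp [Pc_odd h2])
      rw [hev] at hc
      have hc2 : ∑ i ∈ Finset.range (m + 2), Pc (2 * i) * Pc (2 * ((m + 1) - i))
          = 16 ^ (m + 1) := by
        rw [← hc]
        refine Finset.sum_congr rfl fun i hi => ?_
        simp only [Finset.mem_range] at hi
        rw [show 2 * ((m + 1) - i) = 2 * (m + 1) - 2 * i by omega]
      have hH : ∑ i ∈ Finset.range (m + 2),
          (4 ^ i * (Nat.centralBinom i : ℤ))
            * (4 ^ ((m + 1) - i) * (Nat.centralBinom ((m + 1) - i) : ℤ))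
          = 16 ^ (m + 1) := by
        have hcongr : ∀ i ∈ Finset.range (m + 2),
            (4 ^ i * (Nat.centralBinom i : ℤ))
              * (4 ^ ((m + 1) - i) * (Nat.centralBinom ((m + 1) - i) : ℤ))
            = 4 ^ (m + 1) * ((Nat.centralBinom i : ℤ) * (Nat.centralBinom ((m + 1) - i) : ℤ)) := by
          intro i hi
          simp only [Finset.mem_range] at hi
          rw [show (4 : ℤ) ^ i * (Nat.centralBinom i : ℤ)
                * (4 ^ ((m + 1) - i) * (Nat.centralBinom ((m + 1) - i) : ℤ))
              = (4 ^ i * 4 ^ ((m + 1) - i))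
                * ((Nat.centralBinom i : ℤ) * (Nat.centralBinom ((m + 1) - i) : ℤ)) by ring,
            ← pow_add, show i + ((m + 1) - i) = m + 1 by omega]
        rw [Finset.sum_congr rfl hcongr, ← Finset.mul_sum]
        have hs : ∑ i ∈ Finset.range (m + 2),
            ((Nat.centralBinom i : ℤ) * (Nat.centralBinom ((m + 1) - i) : ℤ)) = 4 ^ (m + 1) := by
          exact_mod_cast sum_cb (m + 1)
        rw [hs, show (16 : ℤ) ^ (m + 1) = 4 ^ (m + 1) * 4 ^ (m + 1) by
          norm_num [← mul_pow]]
      -- split both sums and compare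
      set g : ℕ → ℤ := fun i => Pc (2 * i) * Pc (2 * ((m + 1) - i)) with hg
      set h : ℕ → ℤ := fun i => (4 ^ i * (Nat.centralBinom i : ℤ))
          * (4 ^ ((m + 1) - i) * (Nat.centralBinom ((m + 1) - i) : ℤ)) with hh
      have hgsplit : ∑ i ∈ Finset.range (m + 2), g i
          = (∑ i ∈ Finset.range m, g (i + 1)) + g 0 + g (m + 1) := by
        rw [Finset.sum_range_succ, Finset.sum_range_succ']
      have hhsplit : ∑ i ∈ Finset.range (m + 2), h i
          = (∑ i ∈ Finset.range m, h (i + 1)) + h 0 + h (m + 1) := by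
        rw [Finset.sum_range_succ, Finset.sum_range_succ']
      have hmid : ∀ i ∈ Finset.range m, g (i + 1) = h (i + 1) := by
        intro i hi
        simp only [Finset.mem_range] at hi
        simp only [hg, hh]
        rw [ih (i + 1) (by omega), ih ((m + 1) - (i + 1)) (by omega)]
      have hg0 : g 0 = Pc (2 * (m + 1)) := by
        simp [hg, Pc_zero]
      have hgm : g (m + 1) = Pc (2 * (m + 1)) := by
        simp [hg, Pc_zero]
      have hB0 : (Nat.centralBinom 0 : ℤ) = 1 := by simp [Nat.centralBinom]
      have hh0 : h 0 = 4 ^ (m + 1) * (Nat.centralBinom (m + 1) : ℤ) := by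
        simp only [hh, Nat.sub_zero, Nat.sub_self, pow_zero, hB0]
        ring
      have hhm : h (m + 1) = 4 ^ (m + 1) * (Nat.centralBinom (m + 1) : ℤ) := by
        simp only [hh, Nat.sub_zero, Nat.sub_self, pow_zero, hB0]
        ring
      rw [hgsplit, hg0, hgm, Finset.sum_congr rfl hmid] at hc2
      rw [hhsplit, hh0, hhm] at hH
      have : 2 * Pc (2 * (m + 1)) = 2 * (4 ^ (m + 1) * (Nat.centralBinom (m + 1) : ℤ)) := by
        linarith
      linarith

/-! ### The key identity and the final count -/

theorem key_identity (n : ℕ) :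
    (Nat.centralBinom (2 * n) : ℤ)
      + ∑ i ∈ Finset.range n,
          (vc (4 * (i + 1)) : ℤ) * (4 ^ (n - (i + 1)) * (Nat.centralBinom (n - (i + 1)) : ℤ))
      = 4 ^ n * (Nat.centralBinom n : ℤ) := by
  have hser : (1 - SW) * (SB * SB') = SB' := by
    rw [← mul_assoc, one_sub_SW_mul_SB, one_mul]
  have h := congrArg (PowerSeries.coeff (2 * n)) hser
  rw [PowerSeries.coeff_mul, Finset.Nat.sum_antidiagonal_eq_sum_range_succ_mk] at h
  have hrhs : PowerSeries.coeff (2 * n) SB' = (Nat.centralBinom (2 * n) : ℤ) := by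
    simp only [SB', PowerSeries.coeff_mk]
    rw [(even_two_mul n).neg_one_pow, one_mul]
  rw [hrhs] at h
  simp only [← Pc_def] at h
  have hev : ∑ k ∈ Finset.range (2 * n + 1),
      PowerSeries.coeff k (1 - SW) * Pc (2 * n - k)
      = ∑ i ∈ Finset.range (n + 1), PowerSeries.coeff (2 * i) (1 - SW) * Pc (2 * n - 2 * i) :=
    sum_range_even' n (fun k => PowerSeries.coeff k (1 - SW) * Pc (2 * n - k))
      (fun t ht h2 => by simp [Pc_odd (show ¬ 2 ∣ (2 * n - t) by omega)])
  rw [hev] at h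
  rw [Finset.sum_range_succ'
    (fun i => PowerSeries.coeff (2 * i) (1 - SW) * Pc (2 * n - 2 * i)) n] at h
  have hfirst : PowerSeries.coeff (2 * 0) (1 - SW) * Pc (2 * n - 2 * 0)
      = 4 ^ n * (Nat.centralBinom n : ℤ) := by
    rw [show (2 : ℕ) * 0 = 0 by norm_num, coeff_one_sub_SW_zero, one_mul,
      Nat.sub_zero, Pc_even]
  rw [hfirst] at h
  have hstep : ∀ i ∈ Finset.range n,
      PowerSeries.coeff (2 * (i + 1)) (1 - SW) * Pc (2 * n - 2 * (i + 1))
      = -((vc (4 * (i + 1)) : ℤ)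
          * (4 ^ (n - (i + 1)) * (Nat.centralBinom (n - (i + 1)) : ℤ))) := by
    intro i hi
    simp only [Finset.mem_range] at hi
    rw [show 2 * (i + 1) = (2 * i + 1) + 1 by ring, coeff_one_sub_SW_succ,
      show 2 * (2 * i + 1 + 1) = 4 * (i + 1) by ring,
      show 2 * n - (2 * i + 1 + 1) = 2 * (n - (i + 1)) by omega, Pc_even]
    ring
  rw [Finset.sum_congr rfl hstep, Finset.sum_neg_distrib] at h
  linarith

theorem ec_eq (n : ℕ) : ec (4 * n) = 4 ^ n * Nat.centralBinom n := by
  induction n using Nat.strong_induction_on with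
  | _ n ih =>
    have h3 := E3 (4 * n)
    have h4 : ∑ t ∈ Finset.Icc 1 (4 * n), (if 4 ∣ t then vc t * ec (4 * n - t) else 0)
        = ∑ j ∈ Finset.Icc 1 n, vc (4 * j) * ec (4 * n - 4 * j) :=
      sum_Icc_filter_dvd (by norm_num) (fun t => vc t * ec (4 * n - t))
    rw [h4] at h3
    have hu : uc (4 * n) = Nat.centralBinom (2 * n) := by
      rw [show 4 * n = 2 * (2 * n) by ring]
      exact uc_eq (2 * n)
    rw [hu, sum_Icc_one_eq_range] at h3
    have h5 : ∀ i ∈ Finset.range n, vc (4 * (i + 1)) * ec (4 * n - 4 * (i + 1))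
        = vc (4 * (i + 1)) * (4 ^ (n - (i + 1)) * Nat.centralBinom (n - (i + 1))) := by
      intro i hi
      simp only [Finset.mem_range] at hi
      rw [show 4 * n - 4 * (i + 1) = 4 * (n - (i + 1)) by omega, ih (n - (i + 1)) (by omega)]
    rw [Finset.sum_congr rfl h5] at h3
    have hz := key_identity n
    have hfin : (ec (4 * n) : ℤ) = 4 ^ n * (Nat.centralBinom n : ℤ) := by
      rw [← hz]
      have := congrArg (fun x : ℕ => (x : ℤ)) h3
      push_cast at this ⊢
      linarith
    exact_mod_cast hfin

end EZP

theorem card_evenZeroed_eq_pow_mul_centralBinom (n : ℕ) :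
    Nat.card {p : Fin (4 * n) → Bool // IsEvenZeroed p} =
      4 ^ n * Nat.centralBinom n := by
  exact EZP.ec_eq n
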